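/- If every complex of finitely generated free left R-modules is semi-projective, then every complex of projective left R-modules is semi-projective. -/

import Mathlib

open CategoryTheory CategoryTheory.Limits ZeroObject

noncomputable section

/-! ### The balanced tensor product `M ⊗_R N` of a right `R`-module `M` and a left
`R`-module `N`, defined as a quotient of `M ⊗_ℤ N`. -/

section Bal

variable (R : Type) [Ring R]
variable (M : Type) [AddCommGroup M] [Module Rᵐᵒᵖ M]
variable (N : Type) [AddCommGroup N] [Module R N]

/-- The subgroup of balancing relations in `M ⊗_ℤ N`. -/
def balRel : Submodule ℤ (TensorProduct ℤ M N) :=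
  Submodule.span ℤ { x | ∃ (r : R) (m : M) (n : N),
    x = (MulOpposite.op r • m) ⊗ₜ[ℤ] n - m ⊗ₜ[ℤ] (r • n) }

/-- The balanced tensor product `M ⊗_R N` of a right `R`-module `M` and a left
`R`-module `N`, as an abelian group (ℤ-module). -/
abbrev Bal := TensorProduct ℤ M N ⧸ balRel R M N

variable {M N}
variable {M' M'' : Type} [AddCommGroup M'] [Module Rᵐᵒᵖ M'] [AddCommGroup M''] [Module Rᵐᵒᵖ M'']
variable {N' N'' : Type} [AddCommGroup N'] [Module R N'] [AddCommGroup N''] [Module R N'']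

/-- Functoriality of the balanced tensor product. -/
def Bal.map (f : M →ₗ[Rᵐᵒᵖ] M') (g : N →ₗ[R] N') :
    Bal R M N →ₗ[ℤ] Bal R M' N' :=
  Submodule.mapQ _ _ (TensorProduct.map (f.restrictScalars ℤ) (g.restrictScalars ℤ)) (by
    rw [balRel, Submodule.span_le]
    rintro x ⟨r, m, n, rfl⟩
    refine Submodule.subset_span ?_
    exact ⟨r, f m, g n, by erw [LinearMap.map_sub, TensorProduct.map_tmul, TensorProduct.map_tmul]; simp [map_smul]⟩)

@[simp] lemma Bal.map_mk (f : M →ₗ[Rᵐᵒᵖ] M') (g : N →ₗ[R] N') (m : M) (n : N) :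
    Bal.map R f g (Submodule.Quotient.mk (m ⊗ₜ[ℤ] n)) =
      Submodule.Quotient.mk (f m ⊗ₜ[ℤ] g n) := by
  rw [Bal.map]; erw [Submodule.mapQ_apply]; rfl

lemma Bal.hom_ext {P : Type} [AddCommGroup P] [Module ℤ P]
    {h h' : Bal R M N →ₗ[ℤ] P}
    (H : ∀ (m : M) (n : N), h (Submodule.Quotient.mk (m ⊗ₜ[ℤ] n)) =
      h' (Submodule.Quotient.mk (m ⊗ₜ[ℤ] n))) : h = h' := by
  apply Submodule.linearMap_qext
  exact TensorProduct.ext' H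

lemma Bal.map_id :
    Bal.map R (LinearMap.id : M →ₗ[Rᵐᵒᵖ] M) (LinearMap.id : N →ₗ[R] N) = LinearMap.id := by
  apply Bal.hom_ext; intro m n; rw [Bal.map_mk]; rfl

lemma Bal.map_comp (f : M →ₗ[Rᵐᵒᵖ] M') (f' : M' →ₗ[Rᵐᵒᵖ] M'')
    (g : N →ₗ[R] N') (g' : N' →ₗ[R] N'') :
    Bal.map R (f'.comp f) (g'.comp g) = (Bal.map R f' g').comp (Bal.map R f g) := by
  apply Bal.hom_ext; intro m n
  simp

lemma Bal.map_add_left (f f' : M →ₗ[Rᵐᵒᵖ] M') (g : N →ₗ[R] N') :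
    Bal.map R (f + f') g = Bal.map R f g + Bal.map R f' g := by
  apply Bal.hom_ext; intro m n
  simp [← Submodule.Quotient.mk_add, ← TensorProduct.add_tmul]

lemma Bal.map_add_right (f : M →ₗ[Rᵐᵒᵖ] M') (g g' : N →ₗ[R] N') :
    Bal.map R f (g + g') = Bal.map R f g + Bal.map R f g' := by
  apply Bal.hom_ext; intro m n
  simp [← Submodule.Quotient.mk_add, ← TensorProduct.tmul_add]

end Bal

/-! ### The balanced tensor product as a bifunctor -/

section balFunctor

variable (R : Type) [Ring R]

/-- The balanced tensor product bifunctor `ModuleCat Rᵐᵒᵖ ⥤ ModuleCat R ⥤ ModuleCat ℤ`. -/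
def balFunctor : ModuleCat.{0} Rᵐᵒᵖ ⥤ ModuleCat.{0} R ⥤ ModuleCat.{0} ℤ where
  obj M :=
    { obj := fun N => ModuleCat.of ℤ (Bal R M N)
      map := fun {N N'} g => ModuleCat.ofHom (Bal.map R LinearMap.id g.hom)
      map_id := fun N => ModuleCat.hom_ext (Bal.map_id R)
      map_comp := fun {N₁ N₂ N₃} g g' => by
        apply ModuleCat.hom_ext
        have := Bal.map_comp R (LinearMap.id : M →ₗ[Rᵐᵒᵖ] M) LinearMap.id g.hom g'.hom
        rw [LinearMap.id_comp] at this
        exact this }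
  map {M M'} f :=
    { app := fun N => ModuleCat.ofHom (Bal.map R f.hom LinearMap.id)
      naturality := fun {N N'} g => by
        apply ModuleCat.hom_ext
        show (Bal.map R f.hom LinearMap.id).comp (Bal.map R LinearMap.id g.hom)
          = (Bal.map R LinearMap.id g.hom).comp (Bal.map R f.hom LinearMap.id)
        rw [← Bal.map_comp, ← Bal.map_comp]
        simp }
  map_id M := by
    ext N : 2
    apply ModuleCat.hom_ext
    exact Bal.map_id R
  map_comp {M₁ M₂ M₃} f f' := by
    ext N : 2
    apply ModuleCat.hom_ext
    show Bal.map R (f'.hom.comp f.hom) _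
      = (Bal.map R f'.hom LinearMap.id).comp (Bal.map R f.hom LinearMap.id)
    rw [← Bal.map_comp]
    simp

instance balFunctor_additive : (balFunctor R).Additive where
  map_add {M M'} {f f'} := by
    ext N : 2
    apply ModuleCat.hom_ext
    exact Bal.map_add_left R f.hom f'.hom LinearMap.id

instance balFunctor_obj_additive (M : ModuleCat.{0} Rᵐᵒᵖ) :
    ((balFunctor R).obj M).Additive where
  map_add {N N'} {g g'} := ModuleCat.hom_ext (Bal.map_add_right R LinearMap.id g.hom g'.hom)

end balFunctor

/-! ### Module-theoretic notions over a not necessarily commutative ring.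
Right `R`-modules are treated as (left) modules over the opposite ring `Rᵐᵒᵖ`. -/

section ModuleNotions

variable (R : Type) [Ring R]

/-- A left `R`-module `N` is flat if tensoring with it preserves injectivity of maps of
right `R`-modules. -/
def FlatModule (N : Type) [AddCommGroup N] [Module R N] : Prop :=
  ∀ (M M' : Type) [AddCommGroup M] [Module Rᵐᵒᵖ M] [AddCommGroup M'] [Module Rᵐᵒᵖ M']
    (f : M →ₗ[Rᵐᵒᵖ] M'), Function.Injective f →
      Function.Injective (Bal.map R f (LinearMap.id : N →ₗ[R] N))

/-- Vanishing of `Ext¹_R(X, Y)`, expressed by the splitting of every short exact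
sequence `0 → Y → E → X → 0`. -/
def ext1Zero (X Y : Type) [AddCommGroup X] [Module R X] [AddCommGroup Y] [Module R Y] :
    Prop :=
  ∀ (E : Type) [AddCommGroup E] [Module R E] (i : Y →ₗ[R] E) (p : E →ₗ[R] X),
    Function.Injective i → Function.Surjective p → Function.Exact i p →
      ∃ s : X →ₗ[R] E, p.comp s = LinearMap.id

/-- A left `R`-module `C` is cotorsion if `Ext¹_R(F, C) = 0` for every flat left
`R`-module `F`. -/
def CotorsionModule (C : Type) [AddCommGroup C] [Module R C] : Prop :=
  ∀ (F : Type) [AddCommGroup F] [Module R F], FlatModule R F → ext1Zero R F C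

/-- A left `R`-module `E` is fp-injective if `Ext¹_R(F, E) = 0` for every finitely
presented left `R`-module `F`. -/
def FpInjectiveModule (E : Type) [AddCommGroup E] [Module R E] : Prop :=
  ∀ (F : Type) [AddCommGroup F] [Module R F],
    Module.FinitePresentation R F → ext1Zero R F E

/-- A left `R`-module `P` is fp-projective if `Ext¹_R(P, E) = 0` for every fp-injective
left `R`-module `E`. -/
def FpProjectiveModule (P : Type) [AddCommGroup P] [Module R P] : Prop :=
  ∀ (E : Type) [AddCommGroup E] [Module R E], FpInjectiveModule R E → ext1Zero R P E

/-- `ProjDimLE R n M` says that the left `R`-module `M` has projective dimension at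
most `n`, i.e. it admits a projective resolution of length `n`. -/
def ProjDimLE : ℕ → ∀ (M : Type) [AddCommGroup M] [Module R M], Prop
  | 0 => fun M _ _ => Module.Projective R M
  | n + 1 => fun M _ _ =>
      ∃ (P : Type) (_ : AddCommGroup P) (_ : Module R P) (p : P →ₗ[R] M),
        Module.Projective R P ∧ Function.Surjective p ∧
          ProjDimLE n (LinearMap.ker p)

/-- A left `R`-module has finite projective dimension if it admits a finite projective
resolution. -/
def FiniteProjDim (M : Type) [AddCommGroup M] [Module R M] : Prop :=
  ∃ n : ℕ, ProjDimLE R n M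

/-- `FlatDimLE R n M` says that the left `R`-module `M` has flat dimension at most `n`,
i.e. it admits a flat resolution of length `n`. -/
def FlatDimLE : ℕ → ∀ (M : Type) [AddCommGroup M] [Module R M], Prop
  | 0 => fun M _ _ => FlatModule R M
  | n + 1 => fun M _ _ =>
      ∃ (F : Type) (_ : AddCommGroup F) (_ : Module R F) (p : F →ₗ[R] M),
        FlatModule R F ∧ Function.Surjective p ∧
          FlatDimLE n (LinearMap.ker p)

/-- A left `R`-module has finite flat dimension if it admits a finite flat resolution. -/
def FiniteFlatDim (M : Type) [AddCommGroup M] [Module R M] : Prop :=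
  ∃ n : ℕ, FlatDimLE R n M

/-- `R` is right coherent: every finitely generated right ideal of `R` is finitely
presented as a right `R`-module. -/
def RightCoherent : Prop :=
  ∀ I : Submodule Rᵐᵒᵖ R, I.FG → Module.FinitePresentation Rᵐᵒᵖ I

/-- `R` is right regular: every finitely generated right ideal of `R` has finite
projective dimension as a right `R`-module. -/
def RightRegular : Prop :=
  ∀ I : Submodule Rᵐᵒᵖ R, I.FG → FiniteProjDim Rᵐᵒᵖ I

/-- `R` is left coherent: every finitely generated left ideal of `R` is finitely
presented as a left `R`-module. -/
def LeftCoherent : Prop :=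
  ∀ I : Submodule R R, I.FG → Module.FinitePresentation R I

/-- `R` is left regular: every finitely generated left ideal of `R` has finite
projective dimension as a left `R`-module. -/
def LeftRegular : Prop :=
  ∀ I : Submodule R R, I.FG → FiniteProjDim R I

/-- `R` is von Neumann regular if every element `a` has a quasi-inverse `b` with
`a * b * a = a`. -/
def VonNeumannRegular : Prop := ∀ a : R, ∃ b : R, a * b * a = a

/-- An object `M` of `ModuleCat A` admits a projective resolution by degreewise
finitely generated projective modules. -/
def HasDegreewiseFGProjectiveResolution {A : Type} [Ring A] (M : ModuleCat.{0} A) : Prop :=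
  ∃ res : ProjectiveResolution M, ∀ n : ℕ, Module.Finite A (res.complex.X n)

end ModuleNotions

/-! ### Complexes -/

section Complexes

variable (A : Type) [Ring A]

/-- Unbounded (cochain) complexes of modules. -/
abbrev Cx := CochainComplex (ModuleCat.{0} A) ℤ

/-- A complex is acyclic if it is exact in every degree. -/
def IsAcyclic (C : Cx A) : Prop := ∀ n : ℤ, C.ExactAt n

/-- Acyclicity for complexes of abelian groups. -/
def IsAcyclicAb (C : CochainComplex AddCommGrpCat.{0} ℤ) : Prop := ∀ n : ℤ, C.ExactAt n

/-- Acyclicity for complexes of ℤ-modules. -/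
def IsAcyclicZMod (C : CochainComplex (ModuleCat.{0} ℤ) ℤ) : Prop := ∀ n : ℤ, C.ExactAt n

/-- A complex is contractible if it is homotopy equivalent to the zero complex. -/
def IsContractible (C : Cx A) : Prop := Nonempty (HomotopyEquiv C (0 : Cx A))

variable {A}

/-- A complex `P` is semi-projective if it consists of projective modules and the total
Hom complex `Hom(P, C)` is acyclic for every acyclic complex `C`. -/
def SemiProjective (P : Cx A) : Prop :=
  (∀ n : ℤ, Module.Projective A (P.X n)) ∧
  ∀ C : Cx A, IsAcyclic A C → IsAcyclicAb (CochainComplex.HomComplex P C)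

/-- A complex `I` is semi-injective if it consists of injective modules and the total
Hom complex `Hom(C, I)` is acyclic for every acyclic complex `C`. -/
def SemiInjective (I : Cx A) : Prop :=
  (∀ n : ℤ, Module.Injective A (I.X n)) ∧
  ∀ C : Cx A, IsAcyclic A C → IsAcyclicAb (CochainComplex.HomComplex C I)

variable (A)

/-- A complex `E` (of right modules, say) is semi-fp-injective if it consists of
fp-injective modules and the total Hom complex `Hom(X, E)` is acyclic for every acyclic
complex `X` whose cycle modules are all fp-projective. -/
def SemiFpInjective (E : Cx A) : Prop :=
  (∀ n : ℤ, FpInjectiveModule A (E.X n)) ∧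
  ∀ X : Cx A, IsAcyclic A X → (∀ n : ℤ, FpProjectiveModule A (X.cycles n)) →
    IsAcyclicAb (CochainComplex.HomComplex X E)

variable {A}

end Complexes

section TensorComplexes

variable (R : Type) [Ring R]

/-- The total tensor complex `K ⊗_R L` of a complex `K` of right `R`-modules and a
complex `L` of left `R`-modules. -/
def tensorComplex (K : Cx Rᵐᵒᵖ) (L : Cx R) : CochainComplex (ModuleCat.{0} ℤ) ℤ :=
  HomologicalComplex.mapBifunctor K L (balFunctor R) (ComplexShape.up ℤ)

/-- A complex `F` of left `R`-modules is semi-flat if it consists of flat modules and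
the tensor complex `K ⊗_R F` is acyclic for every acyclic complex `K` of right
`R`-modules. -/
def SemiFlat (F : Cx R) : Prop :=
  (∀ n : ℤ, FlatModule R (F.X n)) ∧
  ∀ K : Cx Rᵐᵒᵖ, IsAcyclic Rᵐᵒᵖ K → IsAcyclicZMod (tensorComplex R K F)

/-- An acyclic complex `X` of left `R`-modules is pure acyclic if each short exact
sequence `0 → Z^n(X) → X^n → Z^{n+1}(X) → 0` of cycle modules is pure exact, i.e.
stays a short exact sequence after tensoring with every right `R`-module `M`. -/
def PureAcyclic (X : Cx R) : Prop :=
  IsAcyclic R X ∧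
  ∀ (n : ℤ) (M : ModuleCat.{0} Rᵐᵒᵖ),
    Function.Injective (((balFunctor R).obj M).map (X.iCycles n)) ∧
    Function.Exact (((balFunctor R).obj M).map (X.iCycles n))
      (((balFunctor R).obj M).map (X.toCycles n (n + 1))) ∧
    Function.Surjective (((balFunctor R).obj M).map (X.toCycles n (n + 1)))

/-- `S ⊗_R -` is exact and reflects exactness, where `S` is a right `R`-module. -/
def FaithfullyFlatRight (S : Type) [AddCommGroup S] [Module Rᵐᵒᵖ S] : Prop :=
  ∀ (N₁ N₂ N₃ : Type) [AddCommGroup N₁] [Module R N₁] [AddCommGroup N₂] [Module R N₂]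
    [AddCommGroup N₃] [Module R N₃] (g₁ : N₁ →ₗ[R] N₂) (g₂ : N₂ →ₗ[R] N₃),
    Function.Exact g₁ g₂ ↔
      Function.Exact (Bal.map R (LinearMap.id : S →ₗ[Rᵐᵒᵖ] S) g₁)
        (Bal.map R (LinearMap.id : S →ₗ[Rᵐᵒᵖ] S) g₂)

end TensorComplexes



section P0P1Aux
open CochainComplex.HomComplex Classical

namespace P0P1

lemma hom_sub_apply' {A : Type} [Ring A] {M N : ModuleCat.{0} A} (f g : M ⟶ N) (x : M) :
    (f - g) x = f x - g x := rfl

lemma hom_add_apply' {A : Type} [Ring A] {M N : ModuleCat.{0} A} (f g : M ⟶ N) (x : M) :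
    (f + g) x = f x + g x := rfl

lemma homComplex_exactAt_iff {A : Type} [Ring A] (P C : Cx A) (n : ℤ) :
    (CochainComplex.HomComplex P C).ExactAt n ↔
      ∀ z : Cochain P C n, δ n (n+1) z = 0 →
        ∃ y : Cochain P C (n-1), δ (n-1) n y = z := by
  rw [HomologicalComplex.exactAt_iff' _ (n-1) n (n+1) (by simp) (by simp),
    ShortComplex.ab_exact_iff]
  exact Iff.rfl

lemma retract_acyclic {A : Type} [Ring A] {P F : Cx A} (ι : P ⟶ F) (π : F ⟶ P)
    (hret : ι ≫ π = 𝟙 P) (C : Cx A)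
    (hF : ∀ n : ℤ, (CochainComplex.HomComplex F C).ExactAt n) (n : ℤ) :
    (CochainComplex.HomComplex P C).ExactAt n := by
  rw [homComplex_exactAt_iff]
  intro z hz
  obtain ⟨y', hy'⟩ := (homComplex_exactAt_iff F C n).1 (hF n)
    ((Cochain.ofHom π).comp z (zero_add n)) (by rw [δ_ofHom_comp, hz, Cochain.comp_zero])
  refine ⟨(Cochain.ofHom ι).comp y' (zero_add (n-1)), ?_⟩
  rw [δ_ofHom_comp, hy', ← Cochain.comp_assoc_of_first_is_zero_cochain, ← Cochain.ofHom_comp,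
    hret, Cochain.id_comp]

lemma δ_app {A : Type} [Ring A] {F C : Cx A} (m' m'' : ℤ) (hm : m' + 1 = m'')
    (c : Cochain F C m') (p : ℤ) (x : F.X p) :
    (δ m' m'' c).v p (p + m'') rfl x =
      C.d (p + m') (p + m'') (c.v p (p + m') rfl x) +
      m''.negOnePow • (c.v (p+1) (p + m'') (by omega) (F.d p (p+1) x)) := by
  rw [δ_v m' m'' hm c p (p+m'') rfl (p+m') (p+1) (by omega) rfl]
  simp

variable {R : Type} [Ring R] (F : Cx R) {B : ℤ → Type} (b : ∀ p, Module.Basis (B p) R (F.X p))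

def dsupp (p q : ℤ) (i : B p) : Finset (B q) := ((b q).repr (F.d p q (b p i))).support

def IsCl (S : Set (Σ p, B p)) : Prop :=
  ∀ (p : ℤ) (i : B p), (⟨p, i⟩ : Σ p, B p) ∈ S →
    ∀ l ∈ dsupp F b p (p+1) i, (⟨p+1, l⟩ : Σ p, B p) ∈ S

def slice (S : Set (Σ p, B p)) (p : ℤ) : Set (B p) := {i | (⟨p, i⟩ : Σ p, B p) ∈ S}

def spanU (S : Set (Σ p, B p)) (p : ℤ) : Submodule R (F.X p) :=
  Submodule.span R (b p '' slice S p)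

lemma mem_spanU_of_supp {S : Set (Σ p, B p)} {q : ℤ} (v : F.X q)
    (h : ∀ k ∈ ((b q).repr v).support, k ∈ slice S q) : v ∈ spanU F b S q := by
  have hv := (b q).linearCombination_repr v
  rw [← hv, Finsupp.linearCombination_apply, Finsupp.sum]
  exact Submodule.sum_mem _ (fun k hk => Submodule.smul_mem _ _
    (Submodule.subset_span ⟨k, h k hk, rfl⟩))

lemma d_mem_spanU {S : Set (Σ p, B p)} (hS : IsCl F b S) {p : ℤ} {i : B p}
    (hi : (⟨p, i⟩ : Σ p, B p) ∈ S) : F.d p (p+1) (b p i) ∈ spanU F b S (p+1) :=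
  mem_spanU_of_supp F b _ (fun k hk => hS p i hi k hk)

lemma eqOn_spanU {S : Set (Σ p, B p)} {p : ℤ} {W : Type} [AddCommGroup W] [Module R W]
    (f g : F.X p →ₗ[R] W) (h : ∀ i ∈ slice S p, f (b p i) = g (b p i)) :
    ∀ v ∈ spanU F b S p, f v = g v := by
  intro v hv
  induction hv using Submodule.span_induction with
  | mem x hx => obtain ⟨i, hi, rfl⟩ := hx; exact h i hi
  | zero => simp
  | add x y _ _ hx hy => simp [map_add, hx, hy]
  | smul r x _ hx => simp [map_smul, hx]

lemma d_spanU {S : Set (Σ p, B p)} (hS : IsCl F b S) (p : ℤ) :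
    ∀ v ∈ spanU F b S p, F.d p (p+1) v ∈ spanU F b S (p+1) := by
  intro v hv
  induction hv using Submodule.span_induction with
  | mem x hx => obtain ⟨i, hi, rfl⟩ := hx; exact d_mem_spanU F b hS hi
  | zero => simp
  | add x y _ _ hx hy => rw [map_add]; exact Submodule.add_mem _ hx hy
  | smul r x _ hx => rw [map_smul]; exact Submodule.smul_mem _ _ hx

section Closure

def stepF (x : Σ p, B p) : Finset (Σ p, B p) :=
  (dsupp F b x.1 (x.1+1) x.2).image (fun l => (⟨x.1+1, l⟩ : Σ p, B p))

def NN (x₀ : Σ p, B p) : ℕ → Finset (Σ p, B p)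
  | 0 => {x₀}
  | (k+1) => (NN x₀ k).biUnion (stepF F b)

def Clo (x₀ : Σ p, B p) : Set (Σ p, B p) := ⋃ k, ↑(NN F b x₀ k)

lemma NN_deg (x₀ : Σ p, B p) (k : ℕ) : ∀ x ∈ NN F b x₀ k, x.1 = x₀.1 + k := by
  induction k with
  | zero => intro x hx; simp [NN] at hx; subst hx; simp
  | succ k ih =>
    intro x hx
    simp only [NN, Finset.mem_biUnion] at hx
    obtain ⟨y, hy, hx⟩ := hx
    simp only [stepF, Finset.mem_image] at hx
    obtain ⟨l, _, rfl⟩ := hx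
    have := ih y hy
    push_cast
    omega

lemma mem_Clo_self (x₀ : Σ p, B p) : x₀ ∈ Clo F b x₀ :=
  Set.mem_iUnion.2 ⟨0, by simp [NN]⟩

lemma Clo_closed (x₀ : Σ p, B p) (p : ℤ) (i : B p) (hi : (⟨p,i⟩ : Σ p, B p) ∈ Clo F b x₀)
    (l : B (p+1)) (hl : l ∈ dsupp F b p (p+1) i) : (⟨p+1, l⟩ : Σ p, B p) ∈ Clo F b x₀ := by
  obtain ⟨k, hk⟩ := Set.mem_iUnion.1 hi
  refine Set.mem_iUnion.2 ⟨k+1, ?_⟩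
  simp only [NN, Finset.coe_biUnion, Finset.mem_coe, Set.mem_iUnion]
  exact ⟨⟨p,i⟩, ⟨hk, by simp only [stepF, Finset.mem_image]; exact ⟨l, hl, rfl⟩⟩⟩

lemma slice_Clo_finite (x₀ : Σ p, B p) (p : ℤ) : (slice (Clo F b x₀) p).Finite := by
  have hsub : slice (Clo F b x₀) p ⊆
      (fun i => (⟨p, i⟩ : Σ p, B p)) ⁻¹' ↑(NN F b x₀ (p - x₀.1).toNat) := by
    intro i hi
    obtain ⟨k, hk⟩ := Set.mem_iUnion.1 hi
    have := NN_deg F b x₀ k _ hk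
    simp only [Set.mem_preimage, Finset.coe_sort_coe] at this ⊢
    have : k = (p - x₀.1).toNat := by omega
    subst this; exact hk
  exact Set.Finite.subset (Set.Finite.preimage sigma_mk_injective.injOn
    (Finset.finite_toSet _)) hsub

end Closure

section QComplex

variable (D : Set (Σ p, B p))

abbrev KK (p : ℤ) : Type := ↥(slice (B := B) D p)

def ιQ (p : ℤ) : (KK (B := B) D p →₀ R) →ₗ[R] F.X p :=
  Finsupp.linearCombination R (fun i => b p i.1)

def πQ (p : ℤ) : F.X p →ₗ[R] (KK (B := B) D p →₀ R) :=
  (Finsupp.lcomapDomain _ Subtype.val_injective).comp ((b p).repr.toLinearMap)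

lemma ιQ_single (p : ℤ) (i : KK (B := B) D p) :
    ιQ F b D p (Finsupp.single i 1) = b p i.1 := by
  simp [ιQ]

lemma πQ_b_mem (p : ℤ) (i : B p) (h : i ∈ slice (B := B) D p) :
    πQ F b D p (b p i) = Finsupp.single ⟨i, h⟩ 1 := by
  ext k
  simp [πQ, Finsupp.lcomapDomain, Finsupp.comapDomain_apply, Finsupp.single_apply,
    Subtype.ext_iff]

lemma πQ_b_not (p : ℤ) (i : B p) (h : i ∉ slice (B := B) D p) :
    πQ F b D p (b p i) = 0 := by
  ext k
  simp [πQ, Finsupp.lcomapDomain, Finsupp.comapDomain_apply, Finsupp.single_apply]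
  intro he
  exact absurd (he ▸ k.2) h

variable {S T : Set (Σ p, B p)}

lemma ιQ_mem_spanU (hD : D ⊆ T) (p : ℤ) (x : KK (B := B) D p →₀ R) :
    ιQ F b D p x ∈ spanU F b T p := by
  rw [ιQ, Finsupp.linearCombination_apply, Finsupp.sum]
  exact Submodule.sum_mem _ fun i _ => Submodule.smul_mem _ _
    (Submodule.subset_span ⟨i.1, hD i.2, rfl⟩)

lemma πQ_kill_S (hDS : ∀ x ∈ D, x ∉ S) (p : ℤ) :
    ∀ v ∈ spanU F b S p, πQ F b D p v = 0 := by
  intro v hv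
  induction hv using Submodule.span_induction with
  | mem x hx =>
    obtain ⟨i, hi, rfl⟩ := hx
    exact πQ_b_not F b D p i (fun hmem => hDS _ hmem hi)
  | zero => simp
  | add x y _ _ hx hy => simp [map_add, hx, hy]
  | smul r x _ hx => simp [map_smul, hx]

lemma iotapi_sub (hT : T = S ∪ D) (p : ℤ) :
    ∀ v ∈ spanU F b T p, ιQ F b D p (πQ F b D p v) - v ∈ spanU F b S p := by
  intro v hv
  induction hv using Submodule.span_induction with
  | mem x hx =>
    obtain ⟨i, hi, rfl⟩ := hx
    by_cases hd : i ∈ slice (B := B) D p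
    · rw [πQ_b_mem F b D p i hd, ιQ_single, sub_self]
      exact Submodule.zero_mem _
    · have his : i ∈ slice (B := B) S p := by
        rcases (by rw [hT] at hi; exact hi : (⟨p,i⟩ : Σ p, B p) ∈ S ∪ D) with h | h
        · exact h
        · exact absurd h hd
      rw [πQ_b_not F b D p i hd, map_zero, zero_sub]
      exact Submodule.neg_mem _ (Submodule.subset_span ⟨i, his, rfl⟩)
  | zero => simp
  | add x y _ _ hx hy =>
    have : ιQ F b D p (πQ F b D p (x + y)) - (x + y) =
        (ιQ F b D p (πQ F b D p x) - x) + (ιQ F b D p (πQ F b D p y) - y) := by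
      simp [map_add]; abel
    rw [this]; exact Submodule.add_mem _ hx hy
  | smul r x _ hx =>
    have : ιQ F b D p (πQ F b D p (r • x)) - (r • x) =
        r • (ιQ F b D p (πQ F b D p x) - x) := by
      simp [map_smul, smul_sub]
    rw [this]; exact Submodule.smul_mem _ _ hx

/-- The quotient complex supported on `D = T \ S`. -/
def QC (hS : IsCl F b S) (hTc : IsCl F b T) (hD : D ⊆ T) (hDS : ∀ x ∈ D, x ∉ S)
    (hT : T = S ∪ D) : Cx R :=
  CochainComplex.of (fun p => ModuleCat.of R (KK (B := B) D p →₀ R))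
    (fun p => ModuleCat.ofHom
      ((πQ F b D (p+1)).comp ((F.d p (p+1) : F.X p ⟶ F.X (p+1)).hom.comp (ιQ F b D p))))
    (fun p => by
      apply ModuleCat.hom_ext
      apply LinearMap.ext
      intro x
      have h1 : ιQ F b D p x ∈ spanU F b T p := ιQ_mem_spanU F b D hD p x
      have h2 : F.d p (p+1) (ιQ F b D p x) ∈ spanU F b T (p+1) := d_spanU F b hTc p _ h1
      set w : F.X (p+1) := F.d p (p+1) (ιQ F b D p x) with hw
      have h3 : ιQ F b D (p+1) (πQ F b D (p+1) w) - w ∈ spanU F b S (p+1) :=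
        iotapi_sub F b D hT (p+1) w h2
      show πQ F b D (p+1+1) (F.d (p+1) (p+1+1) (ιQ F b D (p+1) (πQ F b D (p+1) w))) = 0
      have h4 : ιQ F b D (p+1) (πQ F b D (p+1) w) =
          w + (ιQ F b D (p+1) (πQ F b D (p+1) w) - w) := by abel
      rw [h4, map_add]
      have h5 : F.d (p+1) (p+1+1) w = 0 := by
        have hdd := HomologicalComplex.d_comp_d F p (p+1) (p+1+1)
        have h6 := ConcreteCategory.congr_hom hdd (ιQ F b D p x)
        rw [hw]
        rw [ConcreteCategory.comp_apply] at h6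
        exact h6
      rw [h5, zero_add]
      exact πQ_kill_S F b D hDS (p+1+1) _
        (d_spanU F b hS (p+1) _ h3))

end QComplex

section Main

variable (C : Cx R)
include b

/-- The preorder of partial homotopies. -/
def phPre (m : ℤ) : Preorder (Set (Σ p, B p) × Cochain F C m) where
  le a a' := a.1 ⊆ a'.1 ∧ ∀ (p : ℤ) (i : B p), (⟨p,i⟩ : Σ p, B p) ∈ a.1 →
    a'.2.v p (p+m) rfl (b p i) = a.2.v p (p+m) rfl (b p i)
  le_refl a := ⟨subset_rfl, fun _ _ _ => rfl⟩
  le_trans a a' a'' h h' := ⟨h.1.trans h'.1,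
    fun p i hi => (h'.2 p i (h.1 hi)).trans (h.2 p i hi)⟩

lemma main_exact
    (hsp : ∀ Q : Cx R, (∀ k : ℤ, Module.Free R (Q.X k) ∧ Module.Finite R (Q.X k)) →
      SemiProjective Q)
    (hC : IsAcyclic R C) (n : ℤ)
    (z : Cochain F C n) (hz : δ n (n+1) z = 0) :
    ∃ y : Cochain F C (n-1), δ (n-1) n y = z := by
  classical
  letI : Preorder (Set (Σ p, B p) × Cochain F C (n-1)) := phPre F b C (n-1)
  set Good : Set (Set (Σ p, B p) × Cochain F C (n-1)) :=
    {a | IsCl F b a.1 ∧ ∀ (p : ℤ) (i : B p), (⟨p,i⟩ : Σ p, B p) ∈ a.1 →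
      (z - δ (n-1) n a.2).v p (p+n) rfl (b p i) = 0} with hGoodDef
  have hn : (n-1) + 1 = n := by omega
  -- Zorn
  obtain ⟨mm, hmm⟩ : ∃ mm, Maximal (· ∈ Good) mm := by
    apply zorn_le₀
    intro c hcG hchain
    set Su : Set (Σ p, B p) := {x | ∃ a ∈ c, x ∈ a.1} with hSu
    set yu : Cochain F C (n-1) := Cochain.mk (fun p q hpq => ModuleCat.ofHom
      ((b p).constr ℕ (fun i =>
        if hex : ∃ a ∈ c, (⟨p,i⟩ : Σ p, B p) ∈ a.1 then
          hex.choose.2.v p q hpq (b p i) else 0))) with hyu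
    have hagree : ∀ a ∈ c, ∀ (p q : ℤ) (hpq : p + (n-1) = q) (i : B p),
        (⟨p,i⟩ : Σ p, B p) ∈ a.1 → yu.v p q hpq (b p i) = a.2.v p q hpq (b p i) := by
      intro a ha p q hpq i hi
      have hex : ∃ a ∈ c, (⟨p,i⟩ : Σ p, B p) ∈ a.1 := ⟨a, ha, hi⟩
      have : yu.v p q hpq (b p i) = hex.choose.2.v p q hpq (b p i) := by
        rw [hyu, Cochain.mk_v]
        erw [Module.Basis.constr_basis]
        rw [dif_pos hex]
      rw [this]
      obtain ⟨hac, hai⟩ := hex.choose_spec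
      rcases eq_or_ne hex.choose a with he | hne
      · rw [he]
      · rcases hchain hac ha hne with hle | hle
        · obtain rfl : q = p + (n-1) := by omega
          exact (hle.2 p i hai).symm
        · obtain rfl : q = p + (n-1) := by omega
          exact hle.2 p i hi
    have hagree_span : ∀ a ∈ c, ∀ (p q : ℤ) (hpq : p + (n-1) = q),
        ∀ v ∈ spanU F b a.1 p, yu.v p q hpq v = a.2.v p q hpq v := by
      intro a ha p q hpq
      exact eqOn_spanU F b (yu.v p q hpq).hom (a.2.v p q hpq).hom
        (fun i hi => hagree a ha p q hpq i hi)
    refine ⟨(Su, yu), ⟨?_, ?_⟩, ?_⟩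
    · -- closed
      intro p i hi l hl
      obtain ⟨a, ha, hia⟩ := hi
      exact ⟨a, ha, (hcG ha).1 p i hia l hl⟩
    · -- invariant
      intro p i hi
      obtain ⟨a, ha, hia⟩ := hi
      have hinv := (hcG ha).2 p i hia
      rw [Cochain.sub_v, hom_sub_apply', sub_eq_zero] at hinv ⊢
      rw [hinv]
      show (δ (n-1) n a.2).v p (p+n) rfl (b p i) = (δ (n-1) n yu).v p (p+n) rfl (b p i)
      rw [δ_app (n-1) n hn yu p (b p i), δ_app (n-1) n hn a.2 p (b p i)]
      rw [hagree a ha p (p+(n-1)) rfl i hia]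
      rw [hagree_span a ha (p+1) (p+n) (by omega) _
        (d_mem_spanU F b (hcG ha).1 hia)]
    · -- upper bound
      intro a ha
      exact ⟨fun x hx => ⟨a, ha, hx⟩,
        fun p i hi => hagree a ha p (p+(n-1)) rfl i hi⟩
  obtain ⟨⟨hmcl, hminv⟩, hmax⟩ := hmm
  set S : Set (Σ p, B p) := mm.1 with hSdef
  set y : Cochain F C (n-1) := mm.2 with hydef
  -- the current defect
  set cc : Cochain F C n := z - δ (n-1) n y with hcc
  have hδcc : δ n (n+1) cc = 0 := by
    rw [hcc, δ_sub, hz, δ_δ, sub_zero]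
  have hccS : ∀ (p q : ℤ) (hpq : p + n = q), ∀ v ∈ spanU F b S p, cc.v p q hpq v = 0 := by
    intro p q hpq
    have h0 := eqOn_spanU F b (S := S) (cc.v p q hpq).hom 0 ?_
    · intro v hv
      rw [h0 v hv]; rfl
    · intro i hi
      obtain rfl : q = p + n := by omega
      simpa using hminv p i hi
  have hfull : ∀ x : (Σ p, B p), x ∈ S := by
    by_contra hcon
    push_neg at hcon
    obtain ⟨x₀, hx₀⟩ := hcon
    set Clo₀ : Set (Σ p, B p) := Clo F b x₀ with hClo₀
    set T : Set (Σ p, B p) := S ∪ Clo₀ with hTdef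
    set D : Set (Σ p, B p) := Clo₀ \ S with hDdef
    have hTc : IsCl F b T := by
      intro p i hi l hl
      rcases hi with hi | hi
      · exact Or.inl (hmcl p i hi l hl)
      · exact Or.inr (Clo_closed F b x₀ p i hi l hl)
    have hD : D ⊆ T := fun x hx => Or.inr hx.1
    have hDS : ∀ x ∈ D, x ∉ S := fun x hx => hx.2
    have hT : T = S ∪ D := (Set.union_diff_self).symm
    set Q : Cx R := QC F b D hmcl hTc hD hDS hT with hQdef
    have hQfin : ∀ k : ℤ, Module.Free R (Q.X k) ∧ Module.Finite R (Q.X k) := by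
      intro k
      haveI : Finite (KK (B := B) D k) :=
        (((slice_Clo_finite F b x₀ k).subset (fun i hi => hi.1)).to_subtype)
      constructor
      · show Module.Free R ((KK (B := B) D k) →₀ R)
        infer_instance
      · show Module.Finite R ((KK (B := B) D k) →₀ R)
        infer_instance
    have hQex := (hsp Q hQfin).2 C hC
    have hQd : ∀ p : ℤ, (Q.d p (p+1) : Q.X p ⟶ Q.X (p+1)) = ModuleCat.ofHom
        ((πQ F b D (p+1)).comp ((F.d p (p+1) : F.X p ⟶ F.X (p+1)).hom.comp (ιQ F b D p))) :=
      fun p => by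
        show (QC F b D hmcl hTc hD hDS hT).d p (p+1) = _
        simp only [QC]; exact CochainComplex.of_d _ _ p
    set wc : Cochain Q C n := Cochain.mk (fun p q hpq => ModuleCat.ofHom
      ((cc.v p q hpq).hom.comp (ιQ F b D p))) with hwcdef
    have hwc : δ n (n+1) wc = 0 := by
      apply Cochain.ext
      intro p q hpq
      obtain rfl : q = p + (n+1) := by omega
      rw [Cochain.zero_v]
      apply ModuleCat.hom_ext
      apply LinearMap.ext
      intro x
      rw [ModuleCat.hom_zero, LinearMap.zero_apply]
      rw [δ_app n (n+1) rfl wc p x]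
      have e1 : wc.v p (p+n) rfl x = cc.v p (p+n) rfl (ιQ F b D p x) := rfl
      have e2 : wc.v (p+1) (p+(n+1)) (by omega) ((Q.d p (p+1)) x) =
          cc.v (p+1) (p+(n+1)) (by omega)
            (ιQ F b D (p+1) (πQ F b D (p+1) (F.d p (p+1) (ιQ F b D p x)))) := by
        rw [hQd p]; rfl
      rw [e1, e2]
      set w' : F.X (p+1) := F.d p (p+1) (ιQ F b D p x) with hw'
      have hw'T : w' ∈ spanU F b T (p+1) :=
        d_spanU F b hTc p _ (ιQ_mem_spanU F b D hD p x)
      have e3 : cc.v (p+1) (p+(n+1)) (by omega) (ιQ F b D (p+1) (πQ F b D (p+1) w')) =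
          cc.v (p+1) (p+(n+1)) (by omega) w' := by
        have h4 : cc.v (p+1) (p+(n+1)) (by omega)
            (ιQ F b D (p+1) (πQ F b D (p+1) w') - w') = 0 :=
          hccS (p+1) (p+(n+1)) (by omega) _ (iotapi_sub F b D hT (p+1) w' hw'T)
        rw [map_sub, sub_eq_zero] at h4
        exact h4
      rw [e3, hw']
      rw [← δ_app n (n+1) rfl cc p (ιQ F b D p x), hδcc]
      rfl
    obtain ⟨xQ, hxQ⟩ := (homComplex_exactAt_iff Q C n).1 (hQex n) wc hwc
    set xT : Cochain F C (n-1) := Cochain.mk (fun p q hpq => ModuleCat.ofHom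
      ((xQ.v p q hpq).hom.comp (πQ F b D p))) with hxTdef
    have hxT_S : ∀ (p q : ℤ) (hpq : p + (n-1) = q) (i : B p),
        (⟨p,i⟩ : Σ p, B p) ∈ S → xT.v p q hpq (b p i) = 0 := by
      intro p q hpq i hi
      have hnd : i ∉ slice (B := B) D p := fun hd => hDS _ hd hi
      show xQ.v p q hpq (πQ F b D p (b p i)) = 0
      rw [πQ_b_not F b D p i hnd]; exact map_zero _
    have hGood' : (T, y + xT) ∈ Good := by
      refine ⟨hTc, ?_⟩
      intro p i hi
      show (z - δ (n-1) n (y + xT)).v p (p+n) rfl (b p i) = 0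
      have hre : z - δ (n-1) n (y + xT) = cc - δ (n-1) n xT := by
        rw [δ_add, hcc]; abel
      rw [hre, Cochain.sub_v, hom_sub_apply', sub_eq_zero]
      rw [δ_app (n-1) n hn xT p (b p i)]
      by_cases hd : i ∈ slice (B := B) D p
      · have e4 : xT.v p (p+(n-1)) rfl (b p i) =
            xQ.v p (p+(n-1)) rfl (Finsupp.single ⟨i,hd⟩ 1) := by
          show xQ.v p (p+(n-1)) rfl (πQ F b D p (b p i)) = _
          rw [πQ_b_mem F b D p i hd]
        have e5 : xT.v (p+1) (p+n) (by omega) (F.d p (p+1) (b p i)) =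
            xQ.v (p+1) (p+n) (by omega) ((Q.d p (p+1)) (Finsupp.single ⟨i,hd⟩ 1)) := by
          rw [hQd p]
          show xQ.v (p+1) (p+n) (by omega) (πQ F b D (p+1) (F.d p (p+1) (b p i))) =
            xQ.v (p+1) (p+n) (by omega)
              (πQ F b D (p+1) (F.d p (p+1) (ιQ F b D p (Finsupp.single ⟨i,hd⟩ 1))))
          rw [ιQ_single]
        rw [e4, e5, ← δ_app (n-1) n hn xQ p (Finsupp.single ⟨i,hd⟩ 1), hxQ]
        show cc.v p (p+n) rfl (b p i) =
          cc.v p (p+n) rfl (ιQ F b D p (Finsupp.single ⟨i,hd⟩ 1))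
        rw [ιQ_single]
      · have hiS : (⟨p,i⟩ : Σ p, B p) ∈ S := by
          rcases hi with hi | hi
          · exact hi
          · by_contra hns
            exact hd ⟨hi, hns⟩
        have g1 : xT.v p (p+(n-1)) rfl (b p i) = 0 := hxT_S p (p+(n-1)) rfl i hiS
        have g2 : xT.v (p+1) (p+n) (by omega) (F.d p (p+1) (b p i)) = 0 := by
          show xQ.v (p+1) (p+n) (by omega) (πQ F b D (p+1) (F.d p (p+1) (b p i))) = 0
          rw [πQ_kill_S F b D hDS (p+1) _ (d_mem_spanU F b hmcl hiS)]; exact map_zero _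
        rw [g1, g2, map_zero, smul_zero, add_zero]
        simpa using hminv p i hiS
    have hle : mm ≤ (T, y + xT) := by
      refine ⟨Set.subset_union_left, ?_⟩
      intro p i hi
      show (y + xT).v p (p+(n-1)) rfl (b p i) = y.v p (p+(n-1)) rfl (b p i)
      rw [Cochain.add_v, hom_add_apply', hxT_S p (p+(n-1)) rfl i hi, add_zero]
    have hge := hmax hGood' hle
    exact hx₀ (hge.1 (Or.inr (mem_Clo_self F b x₀)))
  refine ⟨y, ?_⟩
  apply Cochain.ext
  intro p q hpq
  obtain rfl : q = p + n := by omega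
  apply ModuleCat.hom_ext
  apply (b p).ext
  intro i
  have hv := hminv p i (hfull ⟨p,i⟩)
  rw [Cochain.sub_v, hom_sub_apply', sub_eq_zero] at hv
  exact hv.symm

end Main

lemma free_homComplex_acyclic {R : Type} [Ring R]
    (hsp : ∀ Q : Cx R, (∀ k : ℤ, Module.Free R (Q.X k) ∧ Module.Finite R (Q.X k)) →
      SemiProjective Q)
    (F : Cx R) (hfree : ∀ p : ℤ, Module.Free R (F.X p))
    (C : Cx R) (hC : IsAcyclic R C) (n : ℤ) :
    (CochainComplex.HomComplex F C).ExactAt n := by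
  let b : ∀ p, Module.Basis (@Module.Free.ChooseBasisIndex R (F.X p) _ _ _ (hfree p)) R (F.X p) :=
    fun p => @Module.Free.chooseBasis _ _ _ _ _ (hfree p)
  rw [homComplex_exactAt_iff]
  intro z hz
  exact main_exact F b C hsp hC n z hz

end P0P1

namespace P0P1S

variable {R : Type} [Ring R]

/-- distributing a Finsupp over a product of ranges -/
def finsuppProd (α : Type) (M N : Type) [AddCommGroup M] [Module R M]
    [AddCommGroup N] [Module R N] : (α →₀ (M × N)) ≃ₗ[R] (α →₀ M) × (α →₀ N) := by
  refine LinearEquiv.ofLinear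
    ((Finsupp.mapRange.linearMap (LinearMap.fst R M N)).prod
      (Finsupp.mapRange.linearMap (LinearMap.snd R M N)))
    ((Finsupp.mapRange.linearMap (LinearMap.inl R M N)).comp (LinearMap.fst R _ _) +
      (Finsupp.mapRange.linearMap (LinearMap.inr R M N)).comp (LinearMap.snd R _ _)) ?_ ?_
  · apply LinearMap.ext
    rintro ⟨f, g⟩
    refine Prod.ext ?_ ?_ <;> ext a <;>
      simp [Finsupp.mapRange.linearMap_apply, Finsupp.mapRange_apply]
  · apply LinearMap.ext
    intro f
    ext a <;>
      simp [Finsupp.mapRange.linearMap_apply, Finsupp.mapRange_apply, Finsupp.add_apply]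

/-- ℕ ≃ Unit ⊕ ℕ -/
def natEquivSum : ℕ ≃ (Unit ⊕ ℕ) where
  toFun n := match n with
    | 0 => Sum.inl ()
    | (k+1) => Sum.inr k
  invFun x := match x with
    | Sum.inl _ => 0
    | Sum.inr k => k + 1
  left_inv n := by cases n <;> rfl
  right_inv x := by rcases x with ⟨⟨⟩⟩ | k <;> rfl

/-- `M × (ℕ →₀ M) ≃ (ℕ →₀ M)` -/
def consEquiv (M : Type) [AddCommGroup M] [Module R M] :
    (M × (ℕ →₀ M)) ≃ₗ[R] (ℕ →₀ M) :=
  (LinearEquiv.prodCongr ((Finsupp.LinearEquiv.finsuppUnique R M Unit).symm)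
      (LinearEquiv.refl R _)).trans
    ((Finsupp.sumFinsuppLEquivProdFinsupp R).symm.trans
      (Finsupp.domLCongr natEquivSum.symm))


section Swindle

lemma free_prod_swindle (M : Type) [AddCommGroup M] [Module R M]
    (h : Module.Projective R M) : Module.Free R (M × (ℕ →₀ (M →₀ R))) := by
  obtain ⟨σ, hσ⟩ := (Module.projective_def').1 h
  set G : Type := (M →₀ R) with hG
  set τ : G →ₗ[R] M := Finsupp.linearCombination R id with hτ
  set K : Submodule R G := LinearMap.ker τ with hK
  have hτσ : ∀ m, τ (σ m) = m := fun m => LinearMap.congr_fun hσ m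
  have hker : ∀ x : G, x - σ (τ x) ∈ K := by
    intro x
    simp [hK, LinearMap.mem_ker, map_sub, hτσ]
  let f : G →ₗ[R] M × K := τ.prod ((LinearMap.id - σ ∘ₗ τ).codRestrict K hker)
  let g : (M × K) →ₗ[R] G := σ ∘ₗ (LinearMap.fst R M K) + K.subtype ∘ₗ (LinearMap.snd R M K)
  have e : G ≃ₗ[R] (M × K) := by
    refine LinearEquiv.ofLinear f g ?_ ?_
    · apply LinearMap.ext
      rintro ⟨m, k⟩
      refine Prod.ext ?_ (Subtype.ext ?_)
      · have hk : τ (k : G) = 0 := k.2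
        simp [f, g, hτσ, hk]
      · have hk : τ (k : G) = 0 := k.2
        simp [f, g, hτσ, hk]
    · apply LinearMap.ext
      intro x
      simp [f, g]
  have E : (M × (ℕ →₀ G)) ≃ₗ[R] (ℕ →₀ G) :=
    ((LinearEquiv.refl R M).prodCongr
        ((Finsupp.mapRange.linearEquiv e).trans (finsuppProd ℕ M K))).trans <|
      ((LinearEquiv.prodAssoc R M (ℕ →₀ M) (ℕ →₀ ↥K)).symm).trans <|
      ((consEquiv M).prodCongr (LinearEquiv.refl R (ℕ →₀ ↥K))).trans <|
      ((finsuppProd ℕ M ↥K).symm).trans (Finsupp.mapRange.linearEquiv e.symm)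
  exact Module.Free.of_equiv E.symm

end Swindle

section FComplex

abbrev Cx (A : Type) [Ring A] := CochainComplex (ModuleCat.{0} A) ℤ

variable {R : Type} [Ring R] (P : Cx R)

/-- the disk modules -/
abbrev MM (n : ℤ) : Type := P.X n
abbrev WW (n : ℤ) : Type := ℕ →₀ (MM P n →₀ R)

/-- the free envelope complex -/
def FF : Cx R :=
  CochainComplex.of
    (fun n => ModuleCat.of R (MM P n × (WW P (n+1) × WW P n)))
    (fun n => ModuleCat.ofHom
      (LinearMap.prod
        ((P.d n (n+1) : P.X n ⟶ P.X (n+1)).hom.comp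
          (LinearMap.fst R _ _))
        (LinearMap.prod 0
          ((LinearMap.fst R (WW P (n+1)) (WW P n)).comp (LinearMap.snd R _ _)))))
    (fun n => by
      apply ModuleCat.hom_ext
      apply LinearMap.ext
      rintro ⟨p, a, b⟩
      have hdd : (P.d (n+1) (n+1+1)) ((P.d n (n+1)) p) = 0 := by
        have h0 := ConcreteCategory.congr_hom (P.d_comp_d n (n+1) (n+1+1)) p
        rw [ConcreteCategory.comp_apply] at h0
        simpa using h0
      refine Prod.ext hdd (Prod.ext rfl rfl))

def ιF : P ⟶ FF P where
  f n := ModuleCat.ofHom (LinearMap.prod LinearMap.id 0)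
  comm' := by
    intro i j hij
    obtain rfl : i + 1 = j := hij
    rw [show (FF P).d i (i+1) = _ from by simp only [FF]; exact CochainComplex.of_d _ _ i]
    apply ModuleCat.hom_ext
    apply LinearMap.ext
    intro x
    refine Prod.ext rfl (Prod.ext rfl rfl)

def πF : FF P ⟶ P where
  f n := ModuleCat.ofHom (LinearMap.fst R _ _)
  comm' := by
    intro i j hij
    obtain rfl : i + 1 = j := hij
    rw [show (FF P).d i (i+1) = _ from by simp only [FF]; exact CochainComplex.of_d _ _ i]
    apply ModuleCat.hom_ext
    apply LinearMap.ext
    intro x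
    rfl

lemma retF : ιF P ≫ πF P = 𝟙 P := by
  apply HomologicalComplex.hom_ext
  intro n
  apply ModuleCat.hom_ext
  apply LinearMap.ext
  intro x
  rfl

lemma freeF (hP : ∀ n : ℤ, Module.Projective R (P.X n)) (n : ℤ) :
    Module.Free R ((FF P).X n) := by
  show Module.Free R (MM P n × (WW P (n+1) × WW P n))
  haveI h1 : Module.Free R (MM P n × WW P n) := free_prod_swindle _ (hP n)
  haveI h2 : Module.Free R (WW P (n+1)) := inferInstance
  have E : ((MM P n × WW P n) × WW P (n+1)) ≃ₗ[R]
      (MM P n × (WW P (n+1) × WW P n)) :=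
    (LinearEquiv.prodAssoc R _ _ _).trans
      ((LinearEquiv.refl R _).prodCongr (LinearEquiv.prodComm R _ _))
  exact Module.Free.of_equiv E

end FComplex
end P0P1S

end P0P1Aux

/-- If every complex of finitely generated free left `R`-modules is semi-projective, then
every complex of projective left `R`-modules is semi-projective. -/
theorem P0_implies_P1 (R : Type) [Ring R]
    (h : ∀ P : Cx R, (∀ n : ℤ, Module.Free R (P.X n) ∧ Module.Finite R (P.X n)) →
      SemiProjective P) :
    ∀ P : Cx R, (∀ n : ℤ, Module.Projective R (P.X n)) → SemiProjective P := by
  intro P hP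
  refine ⟨hP, fun C hC n => ?_⟩
  exact P0P1.retract_acyclic (P0P1S.ιF P) (P0P1S.πF P) (P0P1S.retF P) C
    (fun k => P0P1.free_homComplex_acyclic h (P0P1S.FF P) (P0P1S.freeF P hP) C hC k) n

end
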